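/- Let G=(M,E) be a finite tree with |M| ≥ 2 and nonnegative edge weights w. Then the minimum of Σ_{j∈M} R_j over all feasible vectors R : M → ℝ equals Σ_{e∈E} w_e − min_{e∈E} w_e; that is, every feasible R satisfies Σ_{j∈M} R_j ≥ Σ_{e∈E} w_e − min_{e∈E} w_e, and there exists a feasible R attaining this value. -/

import Mathlib

open scoped Classical

section StmtAux

variable {V : Type*}

/-- In a connected graph, every vertex other than the root has a neighbor strictly
closer to the root. -/
lemma stmt3_parent_step {G : SimpleGraph V} (hc : G.Connected) {a v : V} (hva : v ≠ a) :
    ∃ u, G.Adj v u ∧ G.dist a u + 1 = G.dist a v := by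
  have hpos : 0 < G.dist a v := hc.pos_dist_of_ne (Ne.symm hva)
  obtain ⟨p, hp⟩ := hc.exists_walk_length_eq_dist v a
  cases p with
  | nil => exact absurd rfl hva
  | cons h q =>
    rename_i u
    refine ⟨u, h, ?_⟩
    have h1 : G.dist a u ≤ q.length := by
      simpa using SimpleGraph.dist_le q.reverse
    have h2 : q.length + 1 = G.dist v a := by simpa using hp
    have h3 : G.dist a v ≤ G.dist a u + 1 := by
      have := hc.dist_triangle (u := a) (v := u) (w := v)
      have hd1 : G.dist u v = 1 := by
        rw [SimpleGraph.dist_eq_one_iff_adj]; exact h.symm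
      omega
    have h4 : G.dist v a = G.dist a v := SimpleGraph.dist_comm
    omega

/-- In a tree, adjacent vertices have different distances to any root. -/
lemma stmt3_adj_dist_ne {G : SimpleGraph V} (hT : G.IsTree) (a : V) {x y : V}
    (h : G.Adj x y) : G.dist a x ≠ G.dist a y := by
  intro heq
  obtain ⟨P, hP, hPl⟩ := hT.isConnected.exists_path_of_dist a x
  by_cases hy : y ∈ P.support
  · have h1 : (P.takeUntil y hy).length + (P.dropUntil y hy).length = P.length := by
      have h0 := congrArg SimpleGraph.Walk.length (P.take_spec hy)
      rwa [SimpleGraph.Walk.length_append] at h0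
    have h2 : G.dist a y ≤ (P.takeUntil y hy).length := by
      simpa using SimpleGraph.dist_le (P.takeUntil y hy)
    have h3 : (P.dropUntil y hy).length ≠ 0 := by
      intro h0
      exact h.ne' (SimpleGraph.Walk.eq_of_length_eq_zero h0)
    omega
  · obtain ⟨Q, hQ, hQl⟩ := hT.isConnected.exists_path_of_dist a y
    have hc : (SimpleGraph.Walk.cons h.symm P.reverse).IsPath := by
      rw [SimpleGraph.Walk.cons_isPath_iff]
      exact ⟨hP.reverse, by simpa using hy⟩
    have huniq := SimpleGraph.isAcyclic_iff_path_unique.mp hT.IsAcyclic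
      ⟨(SimpleGraph.Walk.cons h.symm P.reverse).reverse, hc.reverse⟩ ⟨Q, hQ⟩
    have hlen : (SimpleGraph.Walk.cons h.symm P.reverse).reverse.length = Q.length := by
      rw [Subtype.ext_iff] at huniq
      simp only at huniq
      rw [huniq]
    simp [SimpleGraph.Walk.length_reverse] at hlen
    omega

/-- Escape edge: if `a ∈ B` and some vertex is missing from `B`, there is an edge
leaving `B` going away from `a`. -/
lemma stmt3_escape {G : SimpleGraph V} (hc : G.Connected) {a : V} {B : Finset V}
    [DecidableEq V] (ha : a ∈ B) {v : V} (hv : v ∉ B) :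
    ∃ x y, G.Adj x y ∧ x ∈ B ∧ y ∉ B ∧ G.dist a x < G.dist a y := by
  classical
  suffices H : ∀ n : ℕ, ∀ v : V, v ∉ B → G.dist a v ≤ n →
      ∃ x y, G.Adj x y ∧ x ∈ B ∧ y ∉ B ∧ G.dist a x < G.dist a y by
    exact H (G.dist a v) v hv le_rfl
  intro n
  induction n with
  | zero =>
    intro v hv hd
    have hva : v ≠ a := fun h => hv (h ▸ ha)
    have := hc.pos_dist_of_ne (Ne.symm hva)
    omega
  | succ n ih =>
    intro v hv hd
    have hva : v ≠ a := fun h => hv (h ▸ ha)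
    obtain ⟨u, hadj, hdist⟩ := stmt3_parent_step hc hva
    by_cases hu : u ∈ B
    · exact ⟨u, v, hadj.symm, hu, hv, by omega⟩
    · exact ih u hu (by omega)

end StmtAux

theorem stmt_3 {V : Type*} [Fintype V] (G : SimpleGraph V) (hT : G.IsTree)
    (hcard : 2 ≤ Fintype.card V)
    (w : Sym2 V → ℝ) (hw : ∀ e ∈ G.edgeFinset, 0 ≤ w e) :
    (∀ R : V → ℝ, (∀ j, 0 ≤ R j) →
      (∀ B : Finset V, B ⊂ Finset.univ →
        ∑ e ∈ G.edgeFinset.filter (fun e => ∀ v ∈ e, v ∈ B), w e ≤ ∑ j ∈ B, R j) →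
      (∑ e ∈ G.edgeFinset, w e) - sInf (w '' G.edgeSet) ≤ ∑ j, R j) ∧
    (∃ R : V → ℝ, (∀ j, 0 ≤ R j) ∧
      (∀ B : Finset V, B ⊂ Finset.univ →
        ∑ e ∈ G.edgeFinset.filter (fun e => ∀ v ∈ e, v ∈ B), w e ≤ ∑ j ∈ B, R j) ∧
      ∑ j, R j = (∑ e ∈ G.edgeFinset, w e) - sInf (w '' G.edgeSet)) := by
  classical
  have hconn := hT.isConnected
  have hEcard := hT.card_edgeFinset
  have hEne : G.edgeFinset.Nonempty := Finset.card_pos.mp (by omega)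
  have hSne : (w '' G.edgeSet).Nonempty := by
    obtain ⟨e, he⟩ := hEne
    exact ⟨w e, e, SimpleGraph.mem_edgeFinset.mp he, rfl⟩
  have hSfin : (w '' G.edgeSet).Finite := G.edgeSet.toFinite.image w
  set m := sInf (w '' G.edgeSet) with hm
  have hmmem : m ∈ w '' G.edgeSet := Set.Nonempty.csInf_mem hSne hSfin
  have hmin : ∀ e ∈ G.edgeSet, m ≤ w e := fun e he => csInf_le hSfin.bddBelow ⟨e, he, rfl⟩
  have hex : ∀ e : Sym2 V, e ∈ G.edgeSet → w e = m →
      ∃ x y : V, s(x, y) ∈ G.edgeSet ∧ w s(x, y) = m := by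
    intro e
    induction e using Sym2.ind with
    | _ x y => exact fun he hwe => ⟨x, y, he, hwe⟩
  obtain ⟨e₁, he₁, hwe₁⟩ := hmmem
  obtain ⟨a, b, hab, hwab⟩ := hex e₁ he₁ hwe₁
  have hadj : G.Adj a b := hab
  have hstar : s(a, b) ∈ G.edgeFinset := SimpleGraph.mem_edgeFinset.mpr hab
  constructor
  · -- lower bound
    intro R hR0 hfeas
    set H := G \ SimpleGraph.fromEdgeSet {s(a, b)} with hH
    have hbridge : G.IsBridge s(a, b) :=
      (SimpleGraph.isAcyclic_iff_forall_adj_isBridge.mp hT.IsAcyclic) hadj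
    have hnr : ¬H.Reachable a b := SimpleGraph.isBridge_iff.mp hbridge
    set A : Finset V := Finset.univ.filter (fun v => H.Reachable v a) with hA
    have haA : a ∈ A := by
      simp only [hA, Finset.mem_filter, Finset.mem_univ, true_and]
      exact SimpleGraph.Reachable.refl a
    have hbA : b ∉ A := by
      simp only [hA, Finset.mem_filter, Finset.mem_univ, true_and]
      intro hr; exact hnr hr.symm
    have hsame : ∀ x y : V, G.Adj x y → s(x, y) ≠ s(a, b) → (x ∈ A ↔ y ∈ A) := by
      intro x y hxy hne
      have hHadj : H.Adj x y := by
        rw [hH, SimpleGraph.sdiff_adj]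
        refine ⟨hxy, ?_⟩
        rw [SimpleGraph.fromEdgeSet_adj]
        rintro ⟨hmem, -⟩
        exact hne (by simpa using hmem)
      simp only [hA, Finset.mem_filter, Finset.mem_univ, true_and]
      exact ⟨fun hr => hHadj.symm.reachable.trans hr, fun hr => hHadj.reachable.trans hr⟩
    have hunion : G.edgeFinset.filter (fun e => ∀ v ∈ e, v ∈ A) ∪
        G.edgeFinset.filter (fun e => ∀ v ∈ e, v ∈ Aᶜ) = G.edgeFinset.erase s(a, b) := by
      apply Finset.ext
      intro e
      induction e using Sym2.ind with
      | _ x y =>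
        simp only [Finset.mem_union, Finset.mem_filter, Finset.mem_erase]
        constructor
        · rintro (⟨he, hP⟩ | ⟨he, hP⟩)
          · refine ⟨fun hEq => ?_, he⟩
            have hbm : b ∈ s(x, y) := by rw [hEq]; exact Sym2.mem_mk_right a b
            exact hbA (hP b hbm)
          · refine ⟨fun hEq => ?_, he⟩
            have ham : a ∈ s(x, y) := by rw [hEq]; exact Sym2.mem_mk_left a b
            exact (Finset.mem_compl.mp (hP a ham)) haA
        · rintro ⟨hne, he⟩
          have hxy : G.Adj x y := SimpleGraph.mem_edgeFinset.mp he
          by_cases hx : x ∈ A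
          · left
            refine ⟨he, ?_⟩
            intro v hv
            rcases Sym2.mem_iff.mp hv with h | h
            · rw [h]; exact hx
            · rw [h]; exact (hsame x y hxy hne).mp hx
          · right
            refine ⟨he, ?_⟩
            intro v hv
            rcases Sym2.mem_iff.mp hv with h | h
            · rw [h]; exact Finset.mem_compl.mpr hx
            · rw [h]; exact Finset.mem_compl.mpr (fun hy => hx ((hsame x y hxy hne).mpr hy))
    have hdisj : Disjoint (G.edgeFinset.filter (fun e => ∀ v ∈ e, v ∈ A))
        (G.edgeFinset.filter (fun e => ∀ v ∈ e, v ∈ Aᶜ)) := by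
      rw [Finset.disjoint_left]
      intro e heA heB
      have hsome : ∃ x, x ∈ e := Sym2.ind (fun x y => ⟨x, Sym2.mem_mk_left x y⟩) e
      obtain ⟨x, hx⟩ := hsome
      have h1 : x ∈ A := (Finset.mem_filter.mp heA).2 x hx
      have h2 : x ∈ Aᶜ := (Finset.mem_filter.mp heB).2 x hx
      exact (Finset.mem_compl.mp h2) h1
    have hsum : ∑ e ∈ G.edgeFinset.filter (fun e => ∀ v ∈ e, v ∈ A), w e +
        ∑ e ∈ G.edgeFinset.filter (fun e => ∀ v ∈ e, v ∈ Aᶜ), w e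
        = (∑ e ∈ G.edgeFinset, w e) - w s(a, b) := by
      rw [← Finset.sum_union hdisj, hunion, eq_sub_iff_add_eq, Finset.sum_erase_add _ _ hstar]
    have hAprop : A ⊂ Finset.univ := Finset.ssubset_univ_iff.mpr
      (fun h => hbA (by rw [h]; exact Finset.mem_univ b))
    have hAcprop : Aᶜ ⊂ Finset.univ := Finset.ssubset_univ_iff.mpr
      (fun h => (Finset.mem_compl.mp (by rw [h]; exact Finset.mem_univ a)) haA)
    have h1 := hfeas A hAprop
    have h2 := hfeas Aᶜ hAcprop
    have h3 : ∑ j ∈ A, R j + ∑ j ∈ Aᶜ, R j = ∑ j, R j := Finset.sum_add_sum_compl A R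
    have hmw : m = w s(a, b) := hwab.symm
    rw [hmw]
    linarith
  · -- attaining vector
    have hgex : ∀ e : Sym2 V, ∃ j : V,
        e ∈ G.edgeFinset → j ∈ e ∧ ∀ k ∈ e, G.dist a j ≤ G.dist a k := by
      intro e
      induction e using Sym2.ind with
      | _ x y =>
        by_cases hle : G.dist a x ≤ G.dist a y
        · refine ⟨x, fun _ => ⟨Sym2.mem_mk_left x y, ?_⟩⟩
          rintro k hk
          rcases Sym2.mem_iff.mp hk with rfl | rfl
          · exact le_rfl
          · exact hle
        · refine ⟨y, fun _ => ⟨Sym2.mem_mk_right x y, ?_⟩⟩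
          rintro k hk
          rcases Sym2.mem_iff.mp hk with rfl | rfl
          · exact le_of_not_ge hle
          · exact le_rfl
    choose g hg using hgex
    set t := G.edgeFinset.erase s(a, b) with ht
    refine ⟨fun j => ∑ e ∈ t.filter (fun e => g e = j), w e, ?_, ?_, ?_⟩
    · intro j
      apply Finset.sum_nonneg
      intro e he
      exact hw e (Finset.mem_of_mem_erase (Finset.mem_filter.mp he).1)
    · intro B hB
      have hfib : ∑ j ∈ B, ∑ e ∈ t.filter (fun e => g e = j), w e
          = ∑ e ∈ t.filter (fun e => g e ∈ B), w e :=
        Finset.sum_fiberwise_eq_sum_filter t B g w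
      rw [hfib]
      set I := G.edgeFinset.filter (fun e => ∀ v ∈ e, v ∈ B) with hI
      have hsubI : ∀ e ∈ I.erase s(a, b), e ∈ t.filter (fun e => g e ∈ B) := by
        intro e he
        obtain ⟨hne, heI⟩ := Finset.mem_erase.mp he
        obtain ⟨heE, hP⟩ := Finset.mem_filter.mp heI
        exact Finset.mem_filter.mpr
          ⟨Finset.mem_erase.mpr ⟨hne, heE⟩, hP _ ((hg e heE).1)⟩
      have hnonneg : ∀ e ∈ t.filter (fun e => g e ∈ B), 0 ≤ w e := fun e he =>
        hw e (Finset.mem_of_mem_erase (Finset.mem_filter.mp he).1)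
      by_cases hstarI : s(a, b) ∈ I
      · have haB : a ∈ B := (Finset.mem_filter.mp hstarI).2 a (Sym2.mem_mk_left a b)
        have hbB : b ∈ B := (Finset.mem_filter.mp hstarI).2 b (Sym2.mem_mk_right a b)
        obtain ⟨v, -, hvB⟩ := Finset.exists_of_ssubset hB
        obtain ⟨x, y, hxy, hxB, hyB, hdxy⟩ := stmt3_escape hconn haB hvB
        have he0 : s(x, y) ∈ G.edgeFinset := SimpleGraph.mem_edgeFinset.mpr hxy
        have he0ne : s(x, y) ≠ s(a, b) := by
          intro hEq
          have : y ∈ s(a, b) := by rw [← hEq]; exact Sym2.mem_mk_right x y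
          rcases Sym2.mem_iff.mp this with rfl | rfl
          · exact hyB haB
          · exact hyB hbB
        have hgx : g s(x, y) = x := by
          rcases Sym2.mem_iff.mp (hg _ he0).1 with h | h
          · exact h
          · exfalso
            have := (hg _ he0).2 x (Sym2.mem_mk_left x y)
            rw [h] at this
            omega
        have he0S : s(x, y) ∈ t.filter (fun e => g e ∈ B) :=
          Finset.mem_filter.mpr
            ⟨Finset.mem_erase.mpr ⟨he0ne, he0⟩, by rw [hgx]; exact hxB⟩
        have he0I : s(x, y) ∉ I := fun h =>
          hyB ((Finset.mem_filter.mp h).2 y (Sym2.mem_mk_right x y))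
        have hwle : w s(a, b) ≤ w s(x, y) := by
          rw [hwab]
          exact hmin _ (SimpleGraph.mem_edgeFinset.mp he0)
        calc ∑ e ∈ I, w e
            = ∑ e ∈ I.erase s(a, b), w e + w s(a, b) :=
              (Finset.sum_erase_add I w hstarI).symm
          _ ≤ ∑ e ∈ I.erase s(a, b), w e + w s(x, y) := by linarith
          _ = ∑ e ∈ insert s(x, y) (I.erase s(a, b)), w e := by
              rw [Finset.sum_insert (fun h => he0I (Finset.mem_of_mem_erase h))]
              ring
          _ ≤ ∑ e ∈ t.filter (fun e => g e ∈ B), w e := by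
              apply Finset.sum_le_sum_of_subset_of_nonneg
              · intro e he
                rcases Finset.mem_insert.mp he with rfl | he'
                · exact he0S
                · exact hsubI e he'
              · intro e he _
                exact hnonneg e he
      · apply Finset.sum_le_sum_of_subset_of_nonneg
        · intro e he
          exact hsubI e (Finset.mem_erase.mpr ⟨fun h => hstarI (h ▸ he), he⟩)
        · intro e he _
          exact hnonneg e he
    · have hfib : ∑ j, ∑ e ∈ t.filter (fun e => g e = j), w e
          = ∑ e ∈ t.filter (fun e => g e ∈ Finset.univ), w e :=
        Finset.sum_fiberwise_eq_sum_filter t Finset.univ g w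
      have htriv : t.filter (fun e => g e ∈ Finset.univ) = t := by
        apply Finset.filter_true_of_mem
        intro e _
        exact Finset.mem_univ _
      rw [hfib, htriv]
      have : ∑ e ∈ t, w e + w s(a, b) = ∑ e ∈ G.edgeFinset, w e :=
        Finset.sum_erase_add _ _ hstar
      rw [← hwab]
      linarith
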